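/- Let τ be a linear functional on non-commutative polynomials in N variables satisfying |τ(X_{i_1}···X_{i_m})| ≤ R_0^m for all m. Let Θ be a non-commutative double power series with multi-radius of convergence at least R > R_0. Then the partial contraction (1⊗τ)(Θ), whose coefficient of X_{i_1}···X_{i_n} is Σ_{m, j_1,...,j_m} Θ_{i_1...i_n; j_1...j_m} τ(X_{j_1}···X_{j_m}), is well-defined (the defining sums converge absolutely), satisfies φ_{(1⊗τ)(Θ)}(z) ≺ φ_Θ(z, N R_0), belongs to the class of series with multi-radius of convergence at least R, and satisfies ‖(1⊗τ)(Θ)‖_ρ ≤ ‖Θ‖_ρ for all ρ with R_0 < ρ < R. -/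

import Mathlib

open scoped BigOperators ENNReal NNReal

noncomputable def ncCoeffBound {N : ℕ} (f : List (Fin N) → ℂ) (n : ℕ) : ℝ :=
  sSup {r : ℝ | ∃ w : List (Fin N), w.length = n ∧ r = ‖f w‖}

noncomputable def ncNormRho {N : ℕ} (f : List (Fin N) → ℂ) (ρ : ℝ≥0) : ℝ≥0∞ :=
  ∑' n : ℕ, ENNReal.ofReal (ncCoeffBound f n) * (N : ℝ≥0∞) ^ n * (ρ : ℝ≥0∞) ^ n

noncomputable def ncCoeffBound2 {N : ℕ} (Ψ : List (Fin N) × List (Fin N) → ℂ) (n m : ℕ) : ℝ :=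
  sSup {r : ℝ | ∃ u v : List (Fin N), u.length = n ∧ v.length = m ∧ r = ‖Ψ (u, v)‖}

noncomputable def ncNorm2 {N : ℕ} (Ψ : List (Fin N) × List (Fin N) → ℂ) (ρ : ℝ≥0) : ℝ≥0∞ :=
  ∑' p : ℕ × ℕ, ENNReal.ofReal (ncCoeffBound2 Ψ p.1 p.2) *
    ((N : ℝ≥0∞) * (ρ : ℝ≥0∞)) ^ (p.1 + p.2)

/-- Pointwise bound by the coefficient bound. -/
lemma nc_le_coeffBound2 {N : ℕ} (Θ : List (Fin N) × List (Fin N) → ℂ)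
    (u v : List (Fin N)) : ‖Θ (u, v)‖ ≤ ncCoeffBound2 Θ u.length v.length := by
  have hfin : {r : ℝ | ∃ a b : List (Fin N), a.length = u.length ∧ b.length = v.length ∧
      r = ‖Θ (a, b)‖}.Finite := by
    apply Set.Finite.subset
      ((((List.finite_length_eq (Fin N) u.length).prod
        (List.finite_length_eq (Fin N) v.length)).image (fun p => ‖Θ p‖)))
    rintro r ⟨a, b, ha, hb, rfl⟩
    exact ⟨(a, b), ⟨ha, hb⟩, rfl⟩
  exact le_csSup hfin.bddAbove ⟨u, v, rfl, rfl, rfl⟩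

/-- Key summation bound: the (ℝ≥0∞-valued) sum of norms of the contraction terms is bounded by
grouping words by length. -/
lemma nc_tsum_le {N : ℕ} (Θ : List (Fin N) × List (Fin N) → ℂ)
    (τ : List (Fin N) → ℂ) (R₀ : ℝ≥0)
    (hτ : ∀ w : List (Fin N), ‖τ w‖ ≤ (R₀ : ℝ) ^ w.length) (u : List (Fin N)) :
    ∑' v : List (Fin N), (‖Θ (u, v) * τ v‖₊ : ℝ≥0∞) ≤
      ∑' m : ℕ, ENNReal.ofReal (ncCoeffBound2 Θ u.length m) * ((N : ℝ≥0∞) * (R₀ : ℝ≥0∞)) ^ m := by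
  rw [← (Equiv.sigmaFiberEquiv (List.length : List (Fin N) → ℕ)).tsum_eq,
    ENNReal.tsum_sigma']
  refine ENNReal.tsum_le_tsum fun m => ?_
  show (∑' v : List.Vector (Fin N) m, (‖Θ (u, v.toList) * τ v.toList‖₊ : ℝ≥0∞)) ≤ _
  rw [tsum_fintype]
  have hb : ∀ v : List.Vector (Fin N) m,
      (‖Θ (u, v.toList) * τ v.toList‖₊ : ℝ≥0∞) ≤
        ENNReal.ofReal (ncCoeffBound2 Θ u.length m) * (R₀ : ℝ≥0∞) ^ m := by
    intro v
    rw [nnnorm_mul, ENNReal.coe_mul]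
    have h1 : (‖Θ (u, v.toList)‖₊ : ℝ≥0∞) ≤ ENNReal.ofReal (ncCoeffBound2 Θ u.length m) := by
      rw [← enorm_eq_nnnorm, ← ofReal_norm]
      exact ENNReal.ofReal_le_ofReal
        (by simpa [v.toList_length] using nc_le_coeffBound2 Θ u v.toList)
    have h2 : (‖τ v.toList‖₊ : ℝ≥0∞) ≤ (R₀ : ℝ≥0∞) ^ m := by
      rw [← enorm_eq_nnnorm, ← ofReal_norm]
      calc ENNReal.ofReal ‖τ v.toList‖ ≤ ENNReal.ofReal ((R₀ : ℝ) ^ v.toList.length) :=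
            ENNReal.ofReal_le_ofReal (hτ v.toList)
        _ = (R₀ : ℝ≥0∞) ^ m := by
            rw [v.toList_length, ENNReal.ofReal_pow R₀.coe_nonneg, ENNReal.ofReal_coe_nnreal]
    exact mul_le_mul' h1 h2
  calc (∑ v : List.Vector (Fin N) m, (‖Θ (u, v.toList) * τ v.toList‖₊ : ℝ≥0∞))
      ≤ Fintype.card (List.Vector (Fin N) m) •
          (ENNReal.ofReal (ncCoeffBound2 Θ u.length m) * (R₀ : ℝ≥0∞) ^ m) :=
        Finset.sum_le_card_nsmul _ _ _ (fun v _ => hb v)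
    _ = (N : ℝ≥0∞) ^ m *
          (ENNReal.ofReal (ncCoeffBound2 Θ u.length m) * (R₀ : ℝ≥0∞) ^ m) := by
        rw [card_vector, Fintype.card_fin, nsmul_eq_mul]
        push_cast
        ring
    _ = ENNReal.ofReal (ncCoeffBound2 Θ u.length m) * ((N : ℝ≥0∞) * (R₀ : ℝ≥0∞)) ^ m := by
        rw [mul_pow]; ring

/-- Let `τ` be a linear functional on non-commutative polynomials with
`|τ(X_{j₁}⋯X_{j_m})| ≤ R₀^m`, and `Θ` a double power series with multi-radius of
convergence at least `R > R₀`. Then the partial contraction `(1⊗τ)(Θ)` is well-defined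
(the coefficient sums converge absolutely), its majorant satisfies
`φ_{(1⊗τ)Θ}(z) ≺ φ_Θ(z, N R₀)` coefficientwise, and `‖(1⊗τ)(Θ)‖_ρ ≤ ‖Θ‖_ρ` for
`R₀ < ρ < R`; in particular `(1⊗τ)(Θ)` has multi-radius of convergence at least `R`. -/
theorem contraction_bounds (N : ℕ) (Θ : List (Fin N) × List (Fin N) → ℂ)
    (τ : List (Fin N) → ℂ) (R R₀ : ℝ≥0) (hR : R₀ < R)
    (hτ : ∀ w : List (Fin N), ‖τ w‖ ≤ (R₀ : ℝ) ^ w.length)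
    (hΘ : ∀ σ : ℝ≥0, σ < R → ncNorm2 Θ σ < ⊤) :
    (∀ u : List (Fin N), Summable (fun v : List (Fin N) => Θ (u, v) * τ v)) ∧
    (∀ n : ℕ, ENNReal.ofReal
        (ncCoeffBound (fun u => ∑' v : List (Fin N), Θ (u, v) * τ v) n) ≤
      ∑' m : ℕ, ENNReal.ofReal (ncCoeffBound2 Θ n m) * ((N : ℝ≥0∞) * (R₀ : ℝ≥0∞)) ^ m) ∧
    (∀ ρ : ℝ≥0, R₀ < ρ → ρ < R →
      ncNormRho (fun u => ∑' v : List (Fin N), Θ (u, v) * τ v) ρ ≤ ncNorm2 Θ ρ) := by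
  -- choose an intermediate radius
  set σ : ℝ≥0 := (R₀ + R) / 2 with hσdef
  have hσ1 : R₀ < σ := by
    rw [hσdef]
    rw [lt_div_iff₀ (by norm_num : (0:ℝ≥0) < 2)]
    calc R₀ * 2 = R₀ + R₀ := by ring
      _ < R₀ + R := by exact add_lt_add_right hR _
  have hσ2 : σ < R := by
    rw [hσdef, div_lt_iff₀ (by norm_num : (0:ℝ≥0) < 2)]
    calc R₀ + R < R + R := add_lt_add_left hR _
      _ = R * 2 := by ring
  have hσpos : (0 : ℝ≥0) < σ := lt_of_le_of_lt (zero_le : (0:ℝ≥0) ≤ R₀) hσ1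
  -- For each n appearing as a length of an actual word, the majorant series is finite
  have hS : ∀ u : List (Fin N),
      (∑' m : ℕ, ENNReal.ofReal (ncCoeffBound2 Θ u.length m) *
        ((N : ℝ≥0∞) * (R₀ : ℝ≥0∞)) ^ m) < ⊤ := by
    intro u
    set n := u.length with hn
    set a : ℝ≥0∞ := ((N : ℝ≥0∞) * (σ : ℝ≥0∞)) ^ n with ha
    have haT : a ≠ ⊤ := by
      rw [ha]
      exact ENNReal.pow_ne_top (ENNReal.mul_ne_top (ENNReal.natCast_ne_top N) ENNReal.coe_ne_top)
    have ha0 : a ≠ 0 := by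
      rcases Nat.eq_zero_or_pos N with hN | hN
      · have hu : u = [] := by
          cases u with
          | nil => rfl
          | cons h t => subst hN; exact h.elim0
        rw [ha, hn, hu]
        simp
      · rw [ha]
        apply pow_ne_zero
        exact mul_ne_zero (by exact_mod_cast hN.ne') (by simpa using hσpos.ne')
    -- bound ∑' by the σ-series via multiplying by a
    have key : (∑' m : ℕ, ENNReal.ofReal (ncCoeffBound2 Θ n m) *
        ((N : ℝ≥0∞) * (R₀ : ℝ≥0∞)) ^ m) * a ≤ ncNorm2 Θ σ := by
      rw [← ENNReal.tsum_mul_right]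
      have step : ∀ m : ℕ, ENNReal.ofReal (ncCoeffBound2 Θ n m) *
          ((N : ℝ≥0∞) * (R₀ : ℝ≥0∞)) ^ m * a ≤
          ENNReal.ofReal (ncCoeffBound2 Θ n m) * ((N : ℝ≥0∞) * (σ : ℝ≥0∞)) ^ (n + m) := by
        intro m
        rw [ha, pow_add]
        have h1 : ((N : ℝ≥0∞) * (R₀ : ℝ≥0∞)) ^ m ≤ ((N : ℝ≥0∞) * (σ : ℝ≥0∞)) ^ m := by
          gcongr <;> exact_mod_cast hσ1.le
        calc ENNReal.ofReal (ncCoeffBound2 Θ n m) * ((N : ℝ≥0∞) * (R₀ : ℝ≥0∞)) ^ m *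
              ((N : ℝ≥0∞) * (σ : ℝ≥0∞)) ^ n
            ≤ ENNReal.ofReal (ncCoeffBound2 Θ n m) * ((N : ℝ≥0∞) * (σ : ℝ≥0∞)) ^ m *
              ((N : ℝ≥0∞) * (σ : ℝ≥0∞)) ^ n := by gcongr
          _ = ENNReal.ofReal (ncCoeffBound2 Θ n m) *
              (((N : ℝ≥0∞) * (σ : ℝ≥0∞)) ^ n * ((N : ℝ≥0∞) * (σ : ℝ≥0∞)) ^ m) := by ring
      calc ∑' m : ℕ, ENNReal.ofReal (ncCoeffBound2 Θ n m) *
            ((N : ℝ≥0∞) * (R₀ : ℝ≥0∞)) ^ m * a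
          ≤ ∑' m : ℕ, ENNReal.ofReal (ncCoeffBound2 Θ n m) *
            ((N : ℝ≥0∞) * (σ : ℝ≥0∞)) ^ (n + m) := ENNReal.tsum_le_tsum step
        _ ≤ ncNorm2 Θ σ := by
            rw [ncNorm2]
            have hi : Function.Injective (fun m : ℕ => ((n, m) : ℕ × ℕ)) := by
              intro a b hab
              simpa using hab
            exact ENNReal.tsum_comp_le_tsum_of_injective hi
              (fun p => ENNReal.ofReal (ncCoeffBound2 Θ p.1 p.2) *
                ((N : ℝ≥0∞) * (σ : ℝ≥0∞)) ^ (p.1 + p.2))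
    by_contra htop
    push_neg at htop
    have hS' : (∑' m : ℕ, ENNReal.ofReal (ncCoeffBound2 Θ n m) *
        ((N : ℝ≥0∞) * (R₀ : ℝ≥0∞)) ^ m) = ⊤ := top_le_iff.mp htop
    rw [hS', ENNReal.top_mul ha0] at key
    exact (hΘ σ hσ2).ne (top_le_iff.mp key)
  -- Claim 1: summability
  have hnn : ∀ u : List (Fin N), Summable (fun v : List (Fin N) => ‖Θ (u, v) * τ v‖₊) := by
    intro u
    have h1 : (∑' v : List (Fin N), (‖Θ (u, v) * τ v‖₊ : ℝ≥0∞)) ≠ ⊤ :=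
      ne_top_of_le_ne_top (hS u).ne (nc_tsum_le Θ τ R₀ hτ u)
    exact ENNReal.tsum_coe_ne_top_iff_summable.mp h1
  have claim1 : ∀ u : List (Fin N), Summable (fun v : List (Fin N) => Θ (u, v) * τ v) :=
    fun u => Summable.of_nnnorm (hnn u)
  -- the general per-u bound in ℝ≥0∞
  have hnorm : ∀ u : List (Fin N),
      ENNReal.ofReal ‖∑' v : List (Fin N), Θ (u, v) * τ v‖ ≤
        ∑' m : ℕ, ENNReal.ofReal (ncCoeffBound2 Θ u.length m) *
          ((N : ℝ≥0∞) * (R₀ : ℝ≥0∞)) ^ m := by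
    intro u
    have hsum : Summable (fun v : List (Fin N) => ‖Θ (u, v) * τ v‖) := by
      simpa [coe_nnnorm] using NNReal.summable_coe.mpr (hnn u)
    calc ENNReal.ofReal ‖∑' v : List (Fin N), Θ (u, v) * τ v‖
        ≤ ENNReal.ofReal (∑' v : List (Fin N), ‖Θ (u, v) * τ v‖) :=
          ENNReal.ofReal_le_ofReal (norm_tsum_le_tsum_norm hsum)
      _ = ∑' v : List (Fin N), ENNReal.ofReal ‖Θ (u, v) * τ v‖ :=
          ENNReal.ofReal_tsum_of_nonneg (fun v => norm_nonneg _) hsum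
      _ = ∑' v : List (Fin N), (‖Θ (u, v) * τ v‖₊ : ℝ≥0∞) := by
          simp only [ofReal_norm, enorm_eq_nnnorm]
      _ ≤ _ := nc_tsum_le Θ τ R₀ hτ u
  have claim2 : ∀ n : ℕ, ENNReal.ofReal
      (ncCoeffBound (fun u => ∑' v : List (Fin N), Θ (u, v) * τ v) n) ≤
      ∑' m : ℕ, ENNReal.ofReal (ncCoeffBound2 Θ n m) * ((N : ℝ≥0∞) * (R₀ : ℝ≥0∞)) ^ m := by
    intro n
    set S : ℝ≥0∞ := ∑' m : ℕ, ENNReal.ofReal (ncCoeffBound2 Θ n m) *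
      ((N : ℝ≥0∞) * (R₀ : ℝ≥0∞)) ^ m with hSdef
    rcases eq_or_ne S ⊤ with hT | hT
    · rw [hT]; exact le_top
    · have hub : ∀ r ∈ {r : ℝ | ∃ w : List (Fin N), w.length = n ∧
          r = ‖(fun u => ∑' v : List (Fin N), Θ (u, v) * τ v) w‖}, r ≤ S.toReal := by
        rintro r ⟨w, hw, rfl⟩
        have := hnorm w
        rw [hw] at this
        exact (ENNReal.ofReal_le_iff_le_toReal hT).mp this
      have h1 : ncCoeffBound (fun u => ∑' v : List (Fin N), Θ (u, v) * τ v) n ≤ S.toReal :=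
        Real.sSup_le hub ENNReal.toReal_nonneg
      calc ENNReal.ofReal (ncCoeffBound (fun u => ∑' v : List (Fin N), Θ (u, v) * τ v) n)
          ≤ ENNReal.ofReal S.toReal := ENNReal.ofReal_le_ofReal h1
        _ = S := ENNReal.ofReal_toReal hT
  refine ⟨claim1, claim2, ?_⟩
  intro ρ hρ1 hρ2
  rw [ncNormRho, ncNorm2, ENNReal.tsum_prod']
  refine ENNReal.tsum_le_tsum fun n => ?_
  calc ENNReal.ofReal (ncCoeffBound (fun u => ∑' v : List (Fin N), Θ (u, v) * τ v) n) *
        (N : ℝ≥0∞) ^ n * (ρ : ℝ≥0∞) ^ n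
      = ENNReal.ofReal (ncCoeffBound (fun u => ∑' v : List (Fin N), Θ (u, v) * τ v) n) *
        ((N : ℝ≥0∞) * (ρ : ℝ≥0∞)) ^ n := by rw [mul_pow]; ring
    _ ≤ (∑' m : ℕ, ENNReal.ofReal (ncCoeffBound2 Θ n m) * ((N : ℝ≥0∞) * (R₀ : ℝ≥0∞)) ^ m) *
        ((N : ℝ≥0∞) * (ρ : ℝ≥0∞)) ^ n := by gcongr; exact claim2 n
    _ = ∑' m : ℕ, ENNReal.ofReal (ncCoeffBound2 Θ n m) * ((N : ℝ≥0∞) * (R₀ : ℝ≥0∞)) ^ m *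
        ((N : ℝ≥0∞) * (ρ : ℝ≥0∞)) ^ n := ENNReal.tsum_mul_right.symm
    _ ≤ ∑' m : ℕ, ENNReal.ofReal (ncCoeffBound2 Θ n m) *
        ((N : ℝ≥0∞) * (ρ : ℝ≥0∞)) ^ (n + m) := by
      refine ENNReal.tsum_le_tsum fun m => ?_
      rw [pow_add]
      have h1 : ((N : ℝ≥0∞) * (R₀ : ℝ≥0∞)) ^ m ≤ ((N : ℝ≥0∞) * (ρ : ℝ≥0∞)) ^ m := by
        gcongr <;> exact_mod_cast hρ1.le
      calc ENNReal.ofReal (ncCoeffBound2 Θ n m) * ((N : ℝ≥0∞) * (R₀ : ℝ≥0∞)) ^ m *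
            ((N : ℝ≥0∞) * (ρ : ℝ≥0∞)) ^ n
          ≤ ENNReal.ofReal (ncCoeffBound2 Θ n m) * ((N : ℝ≥0∞) * (ρ : ℝ≥0∞)) ^ m *
            ((N : ℝ≥0∞) * (ρ : ℝ≥0∞)) ^ n := by gcongr
        _ = ENNReal.ofReal (ncCoeffBound2 Θ n m) *
            (((N : ℝ≥0∞) * (ρ : ℝ≥0∞)) ^ n * ((N : ℝ≥0∞) * (ρ : ℝ≥0∞)) ^ m) := by ring
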